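/- Let A and B be graded ℤ[U]-modules of HF⁺-type. Then there is a constant D such that for every integer k ≥ D the following holds: if there is an isomorphism of truncations A_{≤k} ≅ B_{≤k} (a family of group isomorphisms A_d ≅ B_d for d ≤ k commuting with U), then A ≅ B as graded ℤ[U]-modules (a family of group isomorphisms A_d ≅ B_d for all d ∈ ℤ commuting with U). -/

import Mathlib

section Aux

variable {A B : ℤ → Type*} [∀ d, AddCommGroup (A d)] [∀ d, AddCommGroup (B d)]
  (UA : ∀ d : ℤ, A d →+ A (d - 2)) (UB : ∀ d : ℤ, B d →+ B (d - 2))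
  (k : ℤ)
  (hA : ∀ d : ℤ, k < d → Function.Bijective (UA d))
  (hB : ∀ d : ℤ, k < d → Function.Bijective (UB d))
  (e : ∀ d : ℤ, d ≤ k → (A d ≃+ B d))

noncomputable def extIso : ∀ n : ℕ, ∀ d : ℤ, d ≤ k + 2 * (n : ℤ) → (A d ≃+ B d)
  | 0 => fun d h => e d (by simpa using h)
  | (n+1) => fun d h =>
    if h' : d ≤ k + 2 * (n : ℤ) then extIso n d h'
    else ((AddEquiv.ofBijective (UA d) (hA d (by omega))).trans
        (extIso n (d - 2) (by push_cast at h ⊢; omega))).trans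
        (AddEquiv.ofBijective (UB d) (hB d (by omega))).symm

lemma extIso_succ (n : ℕ) (d : ℤ) (h : d ≤ k + 2 * (n : ℤ))
    (h2 : d ≤ k + 2 * ((n : ℤ) + 1)) :
    extIso UA UB k hA hB e (n + 1) d (by push_cast; omega) =
      extIso UA UB k hA hB e n d h := by
  simp only [extIso, dif_pos h]

lemma extIso_mono (m n : ℕ) (hnm : n ≤ m) (d : ℤ) (h : d ≤ k + 2 * (n : ℤ))
    (h2 : d ≤ k + 2 * (m : ℤ)) :
    extIso UA UB k hA hB e m d h2 = extIso UA UB k hA hB e n d h := by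
  induction m with
  | zero => obtain rfl := Nat.le_zero.mp hnm; rfl
  | succ m ih =>
    rcases Nat.lt_or_ge n (m + 1) with hn | hn
    · have hn' : n ≤ m := Nat.lt_succ_iff.mp hn
      have hd : d ≤ k + 2 * (m : ℤ) := by push_cast at h ⊢; omega
      rw [extIso_succ UA UB k hA hB e m d hd (by push_cast at h2 ⊢; omega)]
      exact ih hn' hd
    · obtain rfl : n = m + 1 := le_antisymm hnm hn
      rfl

lemma extIso_comm
    (he : ∀ (d : ℤ) (hd : d ≤ k) (x : A d),
      e (d - 2) (le_trans (by omega) hd) (UA d x) = UB d (e d hd x))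
    (n : ℕ) (d : ℤ) (h : d ≤ k + 2 * (n : ℤ)) (h2 : d - 2 ≤ k + 2 * (n : ℤ)) (x : A d) :
    extIso UA UB k hA hB e n (d - 2) h2 (UA d x) =
      UB d (extIso UA UB k hA hB e n d h x) := by
  induction n with
  | zero =>
    exact he d (by simpa using h) x
  | succ n ih =>
    by_cases h' : d ≤ k + 2 * (n : ℤ)
    · have h2' : d - 2 ≤ k + 2 * (n : ℤ) := by omega
      rw [extIso_succ UA UB k hA hB e n d h' (by push_cast; omega),
        extIso_succ UA UB k hA hB e n (d - 2) h2' (by push_cast; omega)]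
      exact ih h' h2'
    · have hd2 : d - 2 ≤ k + 2 * (n : ℤ) := by push_cast at h ⊢; omega
      rw [extIso_succ UA UB k hA hB e n (d - 2) hd2 (by push_cast; omega)]
      simp only [extIso, dif_neg h', AddEquiv.trans_apply, AddEquiv.ofBijective_apply]
      rw [show (UB d) ((AddEquiv.ofBijective (UB d) (hB d (by omega))).symm
          (extIso UA UB k hA hB e n (d - 2) (by push_cast at h ⊢; omega) ((UA d) x)))
        = (AddEquiv.ofBijective (UB d) (hB d (by omega)))
          ((AddEquiv.ofBijective (UB d) (hB d (by omega))).symm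
          (extIso UA UB k hA hB e n (d - 2) (by push_cast at h ⊢; omega) ((UA d) x)))
        from rfl]
      rw [AddEquiv.apply_symm_apply]

end Aux

/-- A graded `ℤ[U]`-module: a family of abelian groups `M d` (`d ∈ ℤ`) with maps
`U : M d →+ M (d-2)`. It is of `HF⁺`-type if `U` is eventually an isomorphism in high degrees
and the groups vanish in all sufficiently small degrees. -/
def IsHFPlusType (M : ℤ → Type*) [∀ d, AddCommGroup (M d)]
    (U : ∀ d : ℤ, M d →+ M (d - 2)) : Prop :=
  (∃ N : ℤ, ∀ d : ℤ, N ≤ d → Function.Bijective (U d)) ∧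
  (∃ N₀ : ℤ, ∀ d : ℤ, d ≤ N₀ → ∀ x : M d, x = 0)

/-- Let `A` and `B` be graded `ℤ[U]`-modules of `HF⁺`-type.  There is a constant `D` such that
for every `k ≥ D`: if the truncations `A_{≤k}` and `B_{≤k}` are isomorphic (a family of group
isomorphisms `A_d ≃+ B_d` for `d ≤ k` commuting with `U`), then `A ≅ B` as graded
`ℤ[U]`-modules (a family of isomorphisms for all `d ∈ ℤ` commuting with `U`). -/
theorem stmt2 (A B : ℤ → Type*) [∀ d, AddCommGroup (A d)] [∀ d, AddCommGroup (B d)]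
    (UA : ∀ d : ℤ, A d →+ A (d - 2)) (UB : ∀ d : ℤ, B d →+ B (d - 2))
    (hA : IsHFPlusType A UA) (hB : IsHFPlusType B UB) :
    ∃ D : ℤ, ∀ k : ℤ, D ≤ k →
      (∃ e : ∀ d : ℤ, d ≤ k → (A d ≃+ B d),
        ∀ (d : ℤ) (hd : d ≤ k) (x : A d),
          e (d - 2) (by omega) (UA d x) = UB d (e d hd x)) →
      ∃ e : ∀ d : ℤ, A d ≃+ B d,
        ∀ (d : ℤ) (x : A d), e (d - 2) (UA d x) = UB d (e d x) := by
  obtain ⟨⟨NA, hNA⟩, -⟩ := hA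
  obtain ⟨⟨NB, hNB⟩, -⟩ := hB
  refine ⟨max NA NB, fun k hk ⟨e, he⟩ => ?_⟩
  have hA' : ∀ d : ℤ, k < d → Function.Bijective (UA d) := fun d hd =>
    hNA d (by have := le_max_left NA NB; omega)
  have hB' : ∀ d : ℤ, k < d → Function.Bijective (UB d) := fun d hd =>
    hNB d (by have := le_max_right NA NB; omega)
  have hle : ∀ d : ℤ, d ≤ k + 2 * ((d - k).toNat : ℤ) := by
    intro d; rcases le_or_gt d k with h | h
    · omega
    · have : ((d - k).toNat : ℤ) = d - k := Int.toNat_of_nonneg (by omega)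
      omega
  refine ⟨fun d => extIso UA UB k hA' hB' e (d - k).toNat d (hle d), fun d x => ?_⟩
  have hmono := extIso_mono UA UB k hA' hB' e (d - k).toNat (d - 2 - k).toNat
    (by omega) (d - 2) (hle (d - 2)) (by have := hle d; push_cast at this ⊢; omega)
  beta_reduce
  rw [← hmono]
  exact extIso_comm UA UB k hA' hB' e he (d - k).toNat d (hle d)
    (by have := hle d; omega) x
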